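/- arXiv:math/0501090 — 2 statements merged into one kernel-verified Lean document; each statement's English description precedes it below -/
import Mathlib

section
/- Let G be a group and A : G → SU(2) an irreducible homomorphism (i.e., the image of A is not contained in any conjugate of the circle subgroup S¹). Suppose χ : G → {±1} is a nontrivial homomorphism and u ∈ SU(2) satisfies χ(g)·A(g) = u·A(g)·u⁻¹ for all g ∈ G. Then u² = -1 and, after conjugation, the image of A is contained in the binary dihedral group S¹ ∪ j·S¹. -/
open Quaternion

/-- The group `SU(2)`, identified with the group of unit quaternions. -/
noncomputable abbrev SU2 : Type := Metric.sphere (0 : ℍ[ℝ]) 1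

/-- The quaternion `i`. -/
noncomputable def qi : ℍ[ℝ] := ⟨0,1,0,0⟩
/-- The quaternion `j`. -/
noncomputable def qj : ℍ[ℝ] := ⟨0,0,1,0⟩
/-- The quaternion `k`. -/
noncomputable def qk : ℍ[ℝ] := ⟨0,0,0,1⟩

lemma mem_SU2_of_normSq {q : ℍ[ℝ]} (h : Quaternion.normSq q = 1) :
    q ∈ Metric.sphere (0 : ℍ[ℝ]) 1 := by
  rw [mem_sphere_zero_iff_norm, norm_eq_sqrt_real_inner, Quaternion.inner_self, h]
  simp

/-- `i` as a unit quaternion. -/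
noncomputable def iSU : SU2 := ⟨qi, mem_SU2_of_normSq (by rw [Quaternion.normSq_def']; simp [qi])⟩
/-- `j` as a unit quaternion. -/
noncomputable def jSU : SU2 := ⟨qj, mem_SU2_of_normSq (by rw [Quaternion.normSq_def']; simp [qj])⟩
/-- `k` as a unit quaternion. -/
noncomputable def kSU : SU2 := ⟨qk, mem_SU2_of_normSq (by rw [Quaternion.normSq_def']; simp [qk])⟩
/-- `-1` as a unit quaternion. -/
noncomputable def negOne : SU2 := ⟨-1, by simp⟩

/-- The circle subgroup `S¹` of unit complex numbers `a + b·i` inside the unit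
quaternions. -/
noncomputable def circleSet : Set SU2 :=
  {u | (u : ℍ[ℝ]).imJ = 0 ∧ (u : ℍ[ℝ]).imK = 0}

/-- The binary dihedral group `S¹ ∪ j·S¹` inside the unit quaternions. -/
noncomputable def binDihSet : Set SU2 :=
  circleSet ∪ (fun w => jSU * w) '' circleSet

/-- A homomorphism to `SU(2)` is irreducible if its image is not contained in any
conjugate of the circle `S¹`. -/
noncomputable def IsIrredRep {G : Type*} [Group G] (A : G →* SU2) : Prop :=
  ¬ ∃ g : SU2, ∀ x : G, g * A x * g⁻¹ ∈ circleSet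

/-- The embedding of `{±1}` into the center of `SU(2)`. -/
noncomputable def sgn (s : ℤˣ) : SU2 := if s = 1 then 1 else negOne


/-! ### auxiliary lemmas -/

lemma SU2.coe_mul (x y : SU2) : ((x * y : SU2) : ℍ[ℝ]) = (x : ℍ[ℝ]) * y := rfl

lemma SU2.coe_one : ((1 : SU2) : ℍ[ℝ]) = 1 := rfl

lemma SU2.coe_ne_zero (x : SU2) : (x : ℍ[ℝ]) ≠ 0 := ne_zero_of_mem_unit_sphere x

lemma SU2.normSq_coe (x : SU2) : normSq (x : ℍ[ℝ]) = 1 := by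
  have := mem_sphere_zero_iff_norm.mp x.2
  rw [Quaternion.normSq_eq_norm_mul_self, this, one_mul]

lemma SU2.coe_negOne : ((negOne : SU2) : ℍ[ℝ]) = -1 := rfl

lemma SU2.conj_coe_mul (w x : SU2) : ((w * x * w⁻¹ : SU2) : ℍ[ℝ]) * (w : ℍ[ℝ]) = (w : ℍ[ℝ]) * x := by
  rw [SU2.coe_mul, SU2.coe_mul, Metric.unitSphere.coe_inv, mul_assoc,
    inv_mul_cancel₀ (SU2.coe_ne_zero w), mul_one]

lemma comm_i {p q : ℍ[ℝ]} (hJ : p.imJ = 0) (hK : p.imK = 0) (hI : p.imI ≠ 0)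
    (h : p * q = q * p) : q.imJ = 0 ∧ q.imK = 0 := by
  have e1 := congrArg QuaternionAlgebra.imJ h
  have e2 := congrArg QuaternionAlgebra.imK h
  simp only [Quaternion.imJ_mul, Quaternion.imK_mul, hJ, hK, zero_mul, mul_zero, add_zero,
    zero_add, sub_zero, zero_sub] at e1 e2
  constructor
  · have : p.imI * q.imJ = 0 := by linarith
    exact (mul_eq_zero.mp this).resolve_left hI
  · have : p.imI * q.imK = 0 := by linarith
    exact (mul_eq_zero.mp this).resolve_left hI

lemma anticomm_i {q : ℍ[ℝ]} (h : qi * q = -(q * qi)) : q.re = 0 ∧ q.imI = 0 := by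
  have e1 := congrArg QuaternionAlgebra.re h
  have e2 := congrArg QuaternionAlgebra.imI h
  simp only [Quaternion.re_mul, Quaternion.imI_mul, Quaternion.re_neg, Quaternion.imI_neg] at e1 e2
  simp [qi] at e1 e2
  constructor <;> linarith

lemma pure_sq {q : ℍ[ℝ]} (hre : q.re = 0) (hn : normSq q = 1) : q * q = -1 := by
  rw [Quaternion.normSq_def'] at hn
  ext <;>
    simp [Quaternion.re_mul, Quaternion.imI_mul, Quaternion.imJ_mul, Quaternion.imK_mul, hre] <;>
    nlinarith

lemma normalize_pure {q : ℍ[ℝ]} (hre : q.re = 0) (hn : normSq q = 1) :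
    ∃ w : SU2, (w : ℍ[ℝ]) * q = qi * (w : ℍ[ℝ]) := by
  by_cases hq : q = -qi
  · refine ⟨jSU, ?_⟩
    show qj * q = qi * qj
    rw [hq]
    ext <;> simp only [Quaternion.re_mul, Quaternion.imI_mul, Quaternion.imJ_mul,
      Quaternion.imK_mul, Quaternion.re_neg, Quaternion.imI_neg, Quaternion.imJ_neg, Quaternion.imK_neg] <;> simp [qi, qj]
  · set s : ℍ[ℝ] := qi + q with hs
    have hs0 : s ≠ 0 := fun h0 => hq (by
      rw [hs] at h0; rw [eq_neg_iff_add_eq_zero, add_comm]; exact h0)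
    have hr : ‖s‖ ≠ 0 := norm_ne_zero_iff.mpr hs0
    refine ⟨⟨‖s‖⁻¹ • s, mem_sphere_zero_iff_norm.mpr
      (by simp [norm_smul, abs_of_nonneg (norm_nonneg s), inv_mul_cancel₀ hr])⟩, ?_⟩
    show (‖s‖⁻¹ • s) * q = qi * (‖s‖⁻¹ • s)
    rw [smul_mul_assoc, mul_smul_comm]
    congr 1
    have hqi2 : qi * qi = -1 := by
      ext <;> simp only [Quaternion.re_mul, Quaternion.imI_mul, Quaternion.imJ_mul,
        Quaternion.imK_mul, Quaternion.re_neg, Quaternion.imI_neg, Quaternion.imJ_neg, Quaternion.imK_neg] <;> simp [qi]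
    have hq2 : q * q = -1 := pure_sq hre hn
    rw [hs, add_mul, mul_add, hq2, hqi2, add_comm]

lemma sgn_central (s : ℤˣ) (x : SU2) : sgn s * x = x * sgn s := by
  rcases Int.units_eq_one_or s with hs | hs <;> rw [hs] <;> apply Subtype.ext <;>
    simp [SU2.coe_mul, sgn, negOne, SU2.coe_one]

lemma sgn_mul_self (s : ℤˣ) : sgn s * sgn s = 1 := by
  rcases Int.units_eq_one_or s with hs | hs <;> rw [hs] <;> apply Subtype.ext <;>
    simp [SU2.coe_mul, sgn, negOne, SU2.coe_one]


set_option maxHeartbeats 2000000 in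
/-- If `A : G →* SU(2)` is irreducible, `χ : G →* {±1}` is nontrivial and
`χ·A = u·A·u⁻¹` pointwise, then `u ^ 2 = -1` and, after conjugation, the image of `A`
lies in the binary dihedral group `S¹ ∪ j·S¹`. -/
theorem twist_conjugate_binary_dihedral {G : Type*} [Group G]
    (A : G →* SU2) (hA : IsIrredRep A) (χ : G →* ℤˣ) (hχ : χ ≠ 1) (u : SU2)
    (h : ∀ g : G, sgn (χ g) * A g = u * A g * u⁻¹) :
    (u : ℍ[ℝ]) ^ 2 = -1 ∧ ∃ w : SU2, ∀ g : G, w * A g * w⁻¹ ∈ binDihSet := by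
  have h2 : ∀ g : G, u * A g = sgn (χ g) * A g * u := by
    intro g; rw [h g]; group
  have hc : ∀ g : G, (u * u) * A g = A g * (u * u) := by
    intro g
    calc (u * u) * A g = u * (u * A g) := by group
      _ = u * (sgn (χ g) * A g * u) := by rw [← h2]
      _ = (u * sgn (χ g)) * A g * u := by group
      _ = (sgn (χ g) * u) * A g * u := by rw [← sgn_central]
      _ = sgn (χ g) * (u * A g) * u := by group
      _ = sgn (χ g) * (sgn (χ g) * A g * u) * u := by rw [← h2]
      _ = (sgn (χ g) * sgn (χ g)) * (A g * (u * u)) := by group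
      _ = A g * (u * u) := by rw [sgn_mul_self]; group
  set v : ℍ[ℝ] := (u : ℍ[ℝ]) * (u : ℍ[ℝ]) with hv
  -- `v` is real
  have hreal : v.imI = 0 ∧ v.imJ = 0 ∧ v.imK = 0 := by
    by_contra hcon
    set m : ℝ := v.imI ^ 2 + v.imJ ^ 2 + v.imK ^ 2 with hm
    have hm0 : m ≠ 0 := by
      intro h0
      exact hcon ⟨by nlinarith [sq_nonneg v.imI, sq_nonneg v.imJ, sq_nonneg v.imK],
        by nlinarith [sq_nonneg v.imI, sq_nonneg v.imJ, sq_nonneg v.imK],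
        by nlinarith [sq_nonneg v.imI, sq_nonneg v.imJ, sq_nonneg v.imK]⟩
    have hmpos : 0 < m := lt_of_le_of_ne (by positivity) (Ne.symm hm0)
    have hsq : (0:ℝ) < Real.sqrt m := Real.sqrt_pos.mpr hmpos
    set vq : ℍ[ℝ] := ⟨0, v.imI, v.imJ, v.imK⟩ with hvq
    set p : ℍ[ℝ] := (Real.sqrt m)⁻¹ • vq with hp
    have hpre : p.re = 0 := by simp only [hp, Quaternion.re_smul]; simp [hvq]
    have hpn : normSq p = 1 := by
      have h3 : normSq p = ((Real.sqrt m)⁻¹) ^ 2 * m := by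
        simp only [hp, Quaternion.normSq_def', Quaternion.re_smul, Quaternion.imI_smul, Quaternion.imJ_smul, Quaternion.imK_smul]; simp [hvq]; ring
      rw [h3, inv_pow, Real.sq_sqrt hmpos.le, inv_mul_cancel₀ hm0]
    obtain ⟨w, hw⟩ := normalize_pure hpre hpn
    have hwv : (w : ℍ[ℝ]) * vq = Real.sqrt m • (qi * (w : ℍ[ℝ])) := by
      have h3 : (w : ℍ[ℝ]) * (Real.sqrt m • p) = Real.sqrt m • (qi * (w : ℍ[ℝ])) := by
        rw [mul_smul_comm, hw]
      rwa [hp, smul_smul, mul_inv_cancel₀ (ne_of_gt hsq), one_smul] at h3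
    set pc : ℍ[ℝ] := v.re • 1 + Real.sqrt m • qi with hpc
    have hvdec : v = v.re • (1 : ℍ[ℝ]) + vq := by
      ext <;> simp [Quaternion.re_add, Quaternion.imI_add, Quaternion.imJ_add, Quaternion.imK_add] <;> simp [hvq]
    have hws : (w : ℍ[ℝ]) * v = pc * (w : ℍ[ℝ]) := by
      rw [hvdec, mul_add, add_mul, hwv, mul_smul_comm, mul_one, smul_mul_assoc, one_mul,
        smul_mul_assoc]
    refine hA ⟨w, fun x => ?_⟩
    set c : ℍ[ℝ] := ((w * A x * w⁻¹ : SU2) : ℍ[ℝ]) with hcc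
    set W : ℍ[ℝ] := (w : ℍ[ℝ]) with hW
    set ax : ℍ[ℝ] := (A x : ℍ[ℝ]) with hax
    have hcw : c * W = W * ax := SU2.conj_coe_mul w (A x)
    have hvax : v * ax = ax * v := by
      have h3 := congrArg (fun z : SU2 => (z : ℍ[ℝ])) (hc x)
      simp only [SU2.coe_mul] at h3
      simpa [hv, hax, mul_assoc] using h3
    have hkey : pc * c = c * pc := by
      apply mul_right_cancel₀ (SU2.coe_ne_zero w)
      calc pc * c * W = pc * (c * W) := mul_assoc _ _ _
        _ = pc * (W * ax) := by rw [hcw]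
        _ = pc * W * ax := (mul_assoc _ _ _).symm
        _ = W * v * ax := by rw [← hws]
        _ = W * (v * ax) := mul_assoc _ _ _
        _ = W * (ax * v) := by rw [hvax]
        _ = W * ax * v := (mul_assoc _ _ _).symm
        _ = c * W * v := by rw [← hcw]
        _ = c * (W * v) := mul_assoc _ _ _
        _ = c * (pc * W) := by rw [hws]
        _ = c * pc * W := (mul_assoc _ _ _).symm
    exact comm_i (p := pc) (by simp [hpc]; simp [qi]) (by simp [hpc]; simp [qi])
      (by simp [hpc]; simp [qi]; exact ne_of_gt hsq) hkey
  -- v real and unit ⇒ v.re = ±1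
  have hvre : v.re = 1 ∨ v.re = -1 := by
    have hn : normSq v = 1 := by
      rw [hv, map_mul, SU2.normSq_coe, one_mul]
    rw [Quaternion.normSq_def', hreal.1, hreal.2.1, hreal.2.2] at hn
    have h3 : (v.re - 1) * (v.re + 1) = 0 := by nlinarith
    rcases mul_eq_zero.mp h3 with h0 | h0
    · left; linarith
    · right; linarith
  have hveq : v = (v.re : ℍ[ℝ]) := by
    ext <;> simp [hreal.1, hreal.2.1, hreal.2.2]
  rcases hvre with h1 | h1
  · -- impossible: u² = 1 forces χ trivial
    exfalso
    have hu2 : (u : ℍ[ℝ]) * (u : ℍ[ℝ]) = 1 := by rw [← hv, hveq, h1]; simp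
    have hupm : (u : ℍ[ℝ]) = 1 ∨ (u : ℍ[ℝ]) = -1 := by
      have h3 : ((u : ℍ[ℝ]) - 1) * ((u : ℍ[ℝ]) + 1) = 0 := by
        rw [mul_add, sub_mul, sub_mul, hu2]
        simp only [one_mul, mul_one]
        abel
      rcases mul_eq_zero.mp h3 with h0 | h0
      · left; exact sub_eq_zero.mp h0
      · right; exact eq_neg_of_add_eq_zero_left h0
    have hcen : ∀ x : SU2, u * x = x * u := by
      intro x
      apply Subtype.ext
      rw [SU2.coe_mul, SU2.coe_mul]
      rcases hupm with h0 | h0 <;> rw [h0] <;> simp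
    have hχ1 : ∀ g : G, χ g = 1 := by
      intro g
      have h4 : sgn (χ g) * A g = A g := by
        rw [h g]
        calc u * A g * u⁻¹ = A g * u * u⁻¹ := by rw [hcen]
          _ = A g := by group
      have hsgn1 : sgn (χ g) = 1 := by
        have h5 : sgn (χ g) * A g = 1 * A g := by rw [h4, one_mul]
        exact mul_right_cancel h5
      by_contra hne
      have h6 : χ g = -1 := (Int.units_eq_one_or (χ g)).resolve_left hne
      rw [sgn, if_neg (by rw [h6]; decide)] at hsgn1
      have h7 := congrArg (fun z : SU2 => (z : ℍ[ℝ]).re) hsgn1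
      simp [SU2.coe_negOne, SU2.coe_one] at h7
      norm_num at h7
    exact hχ (MonoidHom.ext fun g => hχ1 g)
  · -- main case : u² = -1
    have hu2 : (u : ℍ[ℝ]) * (u : ℍ[ℝ]) = -1 := by rw [← hv, hveq, h1]; simp
    refine ⟨by rw [sq]; exact hu2, ?_⟩
    have hure : (u : ℍ[ℝ]).re = 0 := by
      have e1 := congrArg QuaternionAlgebra.re hu2
      have e2 := SU2.normSq_coe u
      rw [Quaternion.normSq_def'] at e2
      simp only [Quaternion.re_mul, Quaternion.re_neg, Quaternion.re_one] at e1
      have h0 : (u : ℍ[ℝ]).re * (u : ℍ[ℝ]).re = 0 := by nlinarith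
      exact mul_self_eq_zero.mp h0
    obtain ⟨w, hw⟩ := normalize_pure hure (SU2.normSq_coe u)
    refine ⟨w, fun g => ?_⟩
    set b : ℍ[ℝ] := ((w * A g * w⁻¹ : SU2) : ℍ[ℝ]) with hb
    set W : ℍ[ℝ] := (w : ℍ[ℝ]) with hW
    set ag : ℍ[ℝ] := (A g : ℍ[ℝ]) with hag
    set U : ℍ[ℝ] := (u : ℍ[ℝ]) with hU
    have hbw : b * W = W * ag := SU2.conj_coe_mul w (A g)
    rcases Int.units_eq_one_or (χ g) with hg | hg
    · -- commuting case
      have hcomm : U * ag = ag * U := by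
        have e : u * A g = A g * u := by
          have := h2 g; rwa [hg, sgn, if_pos rfl, one_mul] at this
        have h3 := congrArg (fun z : SU2 => (z : ℍ[ℝ])) e
        simpa only [SU2.coe_mul] using h3
      have hkey : qi * b = b * qi := by
        apply mul_right_cancel₀ (SU2.coe_ne_zero w)
        calc qi * b * W = qi * (b * W) := mul_assoc _ _ _
          _ = qi * (W * ag) := by rw [hbw]
          _ = (qi * W) * ag := (mul_assoc _ _ _).symm
          _ = (W * U) * ag := by rw [← hw]
          _ = W * (U * ag) := mul_assoc _ _ _
          _ = W * (ag * U) := by rw [hcomm]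
          _ = (W * ag) * U := (mul_assoc _ _ _).symm
          _ = (b * W) * U := by rw [← hbw]
          _ = b * (W * U) := mul_assoc _ _ _
          _ = b * (qi * W) := by rw [hw]
          _ = b * qi * W := (mul_assoc _ _ _).symm
      left
      exact comm_i (p := qi) (by simp [qi]) (by simp [qi]) (by simp [qi]) hkey
    · -- anticommuting case
      have hanti : U * ag = -(ag * U) := by
        have e : u * A g = negOne * A g * u := by
          have := h2 g; rwa [hg, sgn, if_neg (by decide)] at this
        have h3 := congrArg (fun z : SU2 => (z : ℍ[ℝ])) e
        simp only [SU2.coe_mul, SU2.coe_negOne] at h3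
        rw [h3]
        rw [neg_one_mul, neg_mul]
      have hkey : qi * b = -(b * qi) := by
        apply mul_right_cancel₀ (SU2.coe_ne_zero w)
        calc qi * b * W = qi * (b * W) := mul_assoc _ _ _
          _ = qi * (W * ag) := by rw [hbw]
          _ = (qi * W) * ag := (mul_assoc _ _ _).symm
          _ = (W * U) * ag := by rw [← hw]
          _ = W * (U * ag) := mul_assoc _ _ _
          _ = W * (-(ag * U)) := by rw [hanti]
          _ = -((W * ag) * U) := by rw [mul_neg, mul_assoc]
          _ = -((b * W) * U) := by rw [← hbw]
          _ = -(b * (W * U)) := by rw [mul_assoc]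
          _ = -(b * (qi * W)) := by rw [hw]
          _ = -(b * qi) * W := by rw [neg_mul, mul_assoc]
      obtain ⟨hbre, hbI⟩ := anticomm_i hkey
      right
      refine ⟨jSU⁻¹ * (w * A g * w⁻¹), ?_, by group⟩
      set zc : ℍ[ℝ] := ((jSU⁻¹ * (w * A g * w⁻¹) : SU2) : ℍ[ℝ]) with hzc
      have hjz : qj * zc = b := by
        have h3 : ((jSU : SU2) : ℍ[ℝ]) * zc = b := by
          rw [hzc, SU2.coe_mul, Metric.unitSphere.coe_inv, ← mul_assoc,
            mul_inv_cancel₀ (SU2.coe_ne_zero jSU), one_mul, hb]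
        exact h3
      have e1 := congrArg QuaternionAlgebra.re hjz
      have e2 := congrArg QuaternionAlgebra.imI hjz
      simp only [Quaternion.re_mul, Quaternion.imI_mul] at e1 e2
      simp [qj] at e1 e2
      rw [hbre] at e1
      rw [hbI] at e2
      refine ⟨?_, ?_⟩
      · show zc.imJ = 0
        linarith [e1]
      · show zc.imK = 0
        linarith [e2]
end

section
/- Let G be a group such that the abelianization G/[G,G] is infinite cyclic and the commutator subgroup [G,G] is perfect. Then there is no pair (A, χ) where A : G → SU(2) is an irreducible homomorphism, χ : G → {±1} is a nontrivial homomorphism, and χ·A is conjugate to A in SU(2). -/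
open Quaternion

namespace NoTwistAux

lemma cross_of_comm {x u : ℍ[ℝ]} (h : x * u = u * x) :
    x.imJ * u.imK = x.imK * u.imJ ∧ x.imK * u.imI = x.imI * u.imK ∧
      x.imI * u.imJ = x.imJ * u.imI := by
  have h1 := congrArg QuaternionAlgebra.imI h
  have h2 := congrArg QuaternionAlgebra.imJ h
  have h3 := congrArg QuaternionAlgebra.imK h
  simp only [Quaternion.imI_mul, Quaternion.imJ_mul, Quaternion.imK_mul] at h1 h2 h3
  exact ⟨by linear_combination h1 / 2, by linear_combination h2 / 2, by linear_combination h3 / 2⟩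

lemma comm_of_cross {x y : ℍ[ℝ]} (h1 : x.imJ * y.imK = x.imK * y.imJ)
    (h2 : x.imK * y.imI = x.imI * y.imK) (h3 : x.imI * y.imJ = x.imJ * y.imI) :
    x * y = y * x := by
  ext
  · simp only [Quaternion.re_mul]; ring
  · simp only [Quaternion.imI_mul]; linear_combination 2 * h1
  · simp only [Quaternion.imJ_mul]; linear_combination 2 * h2
  · simp only [Quaternion.imK_mul]; linear_combination 2 * h3

lemma cross_trans {x1 x2 x3 y1 y2 y3 u1 u2 u3 : ℝ}
    (hu : ¬ (u1 = 0 ∧ u2 = 0 ∧ u3 = 0))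
    (hx1 : x2 * u3 = x3 * u2) (hx2 : x3 * u1 = x1 * u3) (hx3 : x1 * u2 = x2 * u1)
    (hy1 : y2 * u3 = y3 * u2) (hy2 : y3 * u1 = y1 * u3) (hy3 : y1 * u2 = y2 * u1) :
    x2 * y3 = x3 * y2 ∧ x3 * y1 = x1 * y3 ∧ x1 * y2 = x2 * y1 := by
  have hS : u1 ^ 2 + u2 ^ 2 + u3 ^ 2 ≠ 0 := by
    intro h
    refine hu ⟨?_, ?_, ?_⟩ <;>
      nlinarith [sq_nonneg u1, sq_nonneg u2, sq_nonneg u3]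
  set S := u1 ^ 2 + u2 ^ 2 + u3 ^ 2 with hSdef
  set dx := x1 * u1 + x2 * u2 + x3 * u3 with hdx
  set dy := y1 * u1 + y2 * u2 + y3 * u3 with hdy
  have ex1 : x1 * S = dx * u1 := by rw [hSdef, hdx]; linear_combination u2 * hx3 - u3 * hx2
  have ex2 : x2 * S = dx * u2 := by rw [hSdef, hdx]; linear_combination u3 * hx1 - u1 * hx3
  have ex3 : x3 * S = dx * u3 := by rw [hSdef, hdx]; linear_combination u1 * hx2 - u2 * hx1
  have ey1 : y1 * S = dy * u1 := by rw [hSdef, hdy]; linear_combination u2 * hy3 - u3 * hy2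
  have ey2 : y2 * S = dy * u2 := by rw [hSdef, hdy]; linear_combination u3 * hy1 - u1 * hy3
  have ey3 : y3 * S = dy * u3 := by rw [hSdef, hdy]; linear_combination u1 * hy2 - u2 * hy1
  have key : ∀ a b : ℝ, a * (S * S) = b * (S * S) → a = b := fun a b h =>
    mul_right_cancel₀ (mul_ne_zero hS hS) h
  refine ⟨key _ _ ?_, key _ _ ?_, key _ _ ?_⟩
  · linear_combination (y3 * S) * ex2 + (dx * u2) * ey3 - (y2 * S) * ex3 - (dx * u3) * ey2
  · linear_combination (y1 * S) * ex3 + (dx * u3) * ey1 - (y3 * S) * ex1 - (dx * u1) * ey3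
  · linear_combination (y2 * S) * ex1 + (dx * u1) * ey2 - (y1 * S) * ex2 - (dx * u2) * ey1

lemma quat_comm_trans {u x y : ℍ[ℝ]}
    (hu : ¬ (u.imI = 0 ∧ u.imJ = 0 ∧ u.imK = 0))
    (hx : x * u = u * x) (hy : y * u = u * y) : x * y = y * x := by
  obtain ⟨hx1, hx2, hx3⟩ := cross_of_comm hx
  obtain ⟨hy1, hy2, hy3⟩ := cross_of_comm hy
  obtain ⟨g1, g2, g3⟩ := cross_trans hu hx1 hx2 hx3 hy1 hy2 hy3
  exact comm_of_cross g1 g2 g3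

lemma imJK_eq_zero {c x : ℍ[ℝ]} (h : x * c = c * x) (hJ : c.imJ = 0) (hK : c.imK = 0)
    (hI : c.imI ≠ 0) : x.imJ = 0 ∧ x.imK = 0 := by
  obtain ⟨h1, h2, h3⟩ := cross_of_comm h
  have hK' : x.imK = 0 := by
    have hh : x.imK * c.imI = 0 := by rw [h2, hK, mul_zero]
    exact (mul_eq_zero.mp hh).resolve_right hI
  have hJ' : x.imJ = 0 := by
    have hh : x.imJ * c.imI = 0 := by rw [← h3, hJ, mul_zero]
    exact (mul_eq_zero.mp hh).resolve_right hI
  exact ⟨hJ', hK'⟩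

lemma conj_eq {a b c d s : ℝ} (hs : s ^ 2 = b ^ 2 + c ^ 2 + d ^ 2) :
    (⟨0, b + s, c, d⟩ : ℍ[ℝ]) * ⟨a, b, c, d⟩ = (⟨a, s, 0, 0⟩ : ℍ[ℝ]) * ⟨0, b + s, c, d⟩ := by
  rw [QuaternionAlgebra.mk_mul_mk, QuaternionAlgebra.mk_mul_mk]
  refine QuaternionAlgebra.ext ?_ ?_ ?_ ?_ <;> dsimp only <;>
    first | linear_combination hs | ring

end NoTwistAux

/-- If the abelianization of `G` is infinite cyclic and the commutator subgroup of `G`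
is perfect, then there is no irreducible `A : G →* SU(2)` together with a nontrivial
character `χ : G →* {±1}` such that `χ·A` is conjugate to `A` in `SU(2)`. -/
theorem no_twist_fixed_irreducible {G : Type*} [Group G]
    (h1 : Nonempty (Abelianization G ≃* Multiplicative ℤ))
    (h2 : commutator ↥(commutator G) = ⊤) :
    ¬ ∃ (A : G →* SU2) (χ : G →* ℤˣ) (u : SU2),
        IsIrredRep A ∧ χ ≠ 1 ∧ ∀ g : G, sgn (χ g) * A g = u * A g * u⁻¹ := by
  rintro ⟨A, χ, u, hirr, hχ, hrel⟩
  have coeMul : ∀ z w : SU2, ((z * w : SU2) : ℍ[ℝ]) = (z : ℍ[ℝ]) * (w : ℍ[ℝ]) :=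
    fun z w => rfl
  have coeInv : ∀ z : SU2, ((z⁻¹ : SU2) : ℍ[ℝ]) = (z : ℍ[ℝ])⁻¹ :=
    fun z => Metric.unitSphere.coe_inv z
  -- `u` is not real
  have hu : ¬ ((u : ℍ[ℝ]).imI = 0 ∧ (u : ℍ[ℝ]).imJ = 0 ∧ (u : ℍ[ℝ]).imK = 0) := by
    rintro ⟨hI, hJ, hK⟩
    have hucomm : ∀ z : SU2, u * z = z * u := by
      intro z
      apply Subtype.ext
      rw [coeMul, coeMul]
      exact (NoTwistAux.comm_of_cross (by rw [hK, hJ, mul_zero, mul_zero])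
        (by rw [hI, hK, mul_zero, mul_zero]) (by rw [hJ, hI, mul_zero, mul_zero])).symm
    obtain ⟨t, ht⟩ : ∃ t, χ t ≠ 1 := by
      by_contra hc
      push_neg at hc
      exact hχ (MonoidHom.ext fun g => hc g)
    have ht' : χ t = -1 := (Int.units_eq_one_or (χ t)).resolve_left ht
    have hr := hrel t
    rw [ht'] at hr
    have hsgn : sgn (-1 : ℤˣ) = negOne := by
      rw [sgn, if_neg (by decide)]
    rw [hsgn, hucomm (A t), mul_inv_cancel_right] at hr
    have hone : negOne = 1 := mul_right_cancel (hr.trans (one_mul (A t)).symm)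
    have hcoe := congrArg (fun z : SU2 => (z : ℍ[ℝ]).re) hone
    simp [negOne] at hcoe
    norm_num at hcoe
  -- `χ` is trivial on the commutator subgroup
  have hkerχ : ∀ g ∈ commutator G, χ g = 1 := fun g hg =>
    MonoidHom.mem_ker.mp (Abelianization.commutator_subset_ker χ hg)
  -- `u` commutes with the image of the commutator subgroup
  have hcommU : ∀ g ∈ commutator G, (A g : ℍ[ℝ]) * (u : ℍ[ℝ]) = (u : ℍ[ℝ]) * (A g : ℍ[ℝ]) := by
    intro g hg
    have h := hrel g
    rw [hkerχ g hg] at h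
    have hsgn1 : sgn (1 : ℤˣ) = 1 := if_pos rfl
    rw [hsgn1, one_mul] at h
    have h' : A g * u = u * A g := eq_mul_inv_iff_mul_eq.mp h
    have h'' := congrArg Subtype.val h'
    rw [coeMul, coeMul] at h''
    exact h''
  -- image of the commutator subgroup is commutative
  have hAcommC : ∀ g ∈ commutator G, ∀ g' ∈ commutator G, A g * A g' = A g' * A g := by
    intro g hg g' hg'
    apply Subtype.ext
    rw [coeMul, coeMul]
    exact NoTwistAux.quat_comm_trans hu (hcommU g hg) (hcommU g' hg')
  -- `A` is trivial on the commutator subgroup, by perfectness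
  have htriv : ∀ g ∈ commutator G, A g = 1 := by
    intro g hg
    have hle : commutator ↥(commutator G) ≤ (A.comp (commutator G).subtype).ker := by
      refine Subgroup.commutator_le.mpr fun a _ b _ => ?_
      rw [MonoidHom.mem_ker, map_commutatorElement, commutatorElement_eq_one_iff_mul_comm]
      exact hAcommC a.1 a.2 b.1 b.2
    have hm : (⟨g, hg⟩ : ↥(commutator G)) ∈ (A.comp (commutator G).subtype).ker := by
      refine hle ?_
      rw [h2]
      exact Subgroup.mem_top _
    simpa [MonoidHom.mem_ker] using hm
  -- the image of `A` is abelian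
  have habel : ∀ x y : G, A x * A y = A y * A x := by
    intro x y
    rw [← commutatorElement_eq_one_iff_mul_comm, ← map_commutatorElement]
    refine htriv _ ?_
    rw [commutator_def]
    exact Subgroup.commutator_mem_commutator (Subgroup.mem_top x) (Subgroup.mem_top y)
  -- derive a contradiction with irreducibility
  apply hirr
  rcases Classical.em (∃ x : G, ¬ ((A x : ℍ[ℝ]).imJ = 0 ∧ (A x : ℍ[ℝ]).imK = 0)) with hex | hex
  · obtain ⟨x0, hq⟩ := hex
    set q : ℍ[ℝ] := (A x0 : ℍ[ℝ]) with hqdef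
    have hqpos : 0 < q.imI ^ 2 + q.imJ ^ 2 + q.imK ^ 2 := by
      rcases not_and_or.mp hq with h | h
      · nlinarith [sq_nonneg q.imI, sq_nonneg q.imK, pow_two_pos_of_ne_zero h]
      · nlinarith [sq_nonneg q.imI, sq_nonneg q.imJ, pow_two_pos_of_ne_zero h]
    set s : ℝ := Real.sqrt (q.imI ^ 2 + q.imJ ^ 2 + q.imK ^ 2) with hsdef
    have hs2 : s ^ 2 = q.imI ^ 2 + q.imJ ^ 2 + q.imK ^ 2 := Real.sq_sqrt hqpos.le
    have hspos : 0 < s := Real.sqrt_pos.mpr hqpos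
    set g0 : ℍ[ℝ] := ⟨0, q.imI + s, q.imJ, q.imK⟩ with hg0def
    set c : ℍ[ℝ] := ⟨q.re, s, 0, 0⟩ with hcdef
    have key : g0 * q = c * g0 := NoTwistAux.conj_eq hs2
    have hg0 : g0 ≠ 0 := by
      intro h
      refine hq ⟨?_, ?_⟩
      · have := congrArg QuaternionAlgebra.imJ h
        simpa [hg0def] using this
      · have := congrArg QuaternionAlgebra.imK h
        simpa [hg0def] using this
    set a0 : ℍ[ℝ] := ‖g0‖⁻¹ • g0 with ha0def
    have ha0 : a0 ≠ 0 :=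
      smul_ne_zero (inv_ne_zero (norm_ne_zero_iff.mpr hg0)) hg0
    have hnorm : ‖a0‖ = 1 := by
      rw [ha0def, norm_smul, norm_inv, norm_norm, inv_mul_cancel₀ (norm_ne_zero_iff.mpr hg0)]
    set gS : SU2 := ⟨a0, mem_sphere_zero_iff_norm.mpr hnorm⟩ with hgSdef
    have keyA : a0 * q = c * a0 := by
      rw [ha0def, smul_mul_assoc, key, mul_smul_comm]
    have hconj : a0 * q * a0⁻¹ = c := by
      rw [mul_inv_eq_iff_eq_mul₀ ha0]
      exact keyA
    have hk : ∀ z z' : ℍ[ℝ], (a0 * z * a0⁻¹) * (a0 * z' * a0⁻¹) = a0 * (z * z') * a0⁻¹ := by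
      intro z z'
      simp only [mul_assoc, inv_mul_cancel_left₀ ha0]
    refine ⟨gS, fun x => ?_⟩
    have hwcoe : ((gS * A x * gS⁻¹ : SU2) : ℍ[ℝ]) = a0 * (A x : ℍ[ℝ]) * a0⁻¹ := by
      rw [coeMul, coeMul, coeInv]
    have hxq : (A x : ℍ[ℝ]) * q = q * (A x : ℍ[ℝ]) := by
      have := congrArg Subtype.val (habel x x0)
      rw [coeMul, coeMul] at this
      exact this
    have hcw : (a0 * (A x : ℍ[ℝ]) * a0⁻¹) * c = c * (a0 * (A x : ℍ[ℝ]) * a0⁻¹) := by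
      rw [← hconj, hk, hk, hxq]
    have hcw2 : ((gS * A x * gS⁻¹ : SU2) : ℍ[ℝ]) * c = c * ((gS * A x * gS⁻¹ : SU2) : ℍ[ℝ]) := by
      rw [hwcoe]; exact hcw
    have hfin := NoTwistAux.imJK_eq_zero hcw2 rfl rfl (show c.imI ≠ 0 from ne_of_gt hspos)
    exact hfin
  · push_neg at hex
    refine ⟨1, fun x => ?_⟩
    rw [one_mul, inv_one, mul_one]
    exact hex x
end
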